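/- arXiv:2305.02688 — 3 statements merged into one kernel-verified Lean document; each statement's English description precedes it below -/
import Mathlib

section
/- Let M be a smooth manifold with an affine connection ∇ whose curvature vanishes and whose torsion T is parallel (∇T = 0). Define on the space of smooth vector fields X(M) the operations x ▷ y = ∇_x y and [x, y] = −T(x, y). Then (X(M), [·,·], ▷) is a post-Lie algebra; in particular [·,·] is a Lie bracket and both post-Lie axioms hold. -/
open scoped Manifold

/-- Smooth real-valued functions on a manifold. -/
abbrev SmoothFunc {E₀ : Type*} [NormedAddCommGroup E₀] [NormedSpace ℝ E₀]
    {H₀ : Type*} [TopologicalSpace H₀] (I : ModelWithCorners ℝ E₀ H₀)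
    (M : Type*) [TopologicalSpace M] [ChartedSpace H₀ M] : Type _ :=
  ContMDiffMap I 𝓘(ℝ, ℝ) M ℝ (⊤ : ℕ∞)

/-- Smooth vector fields on a manifold, modelled as derivations of the algebra of
smooth functions. -/
abbrev VectorField {E₀ : Type*} [NormedAddCommGroup E₀] [NormedSpace ℝ E₀]
    {H₀ : Type*} [TopologicalSpace H₀] (I : ModelWithCorners ℝ E₀ H₀)
    (M : Type*) [TopologicalSpace M] [ChartedSpace H₀ M] : Type _ :=
  Derivation ℝ (SmoothFunc I M) (SmoothFunc I M)

set_option maxHeartbeats 2000000 in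
/-- For a smooth manifold `M` with an affine connection `cov` whose curvature
vanishes and whose torsion `T` is parallel, the operations `x ▷ y = cov x y` and
`[x,y] = -T x y` make the vector fields of `M` into a post-Lie algebra. -/
theorem postLie_of_flat_connection_with_parallel_torsion
    {E₀ : Type*} [NormedAddCommGroup E₀] [NormedSpace ℝ E₀]
    {H₀ : Type*} [TopologicalSpace H₀] (I : ModelWithCorners ℝ E₀ H₀)
    (M : Type*) [TopologicalSpace M] [ChartedSpace H₀ M] [IsManifold I (⊤ : ℕ∞) M]
    -- an affine connection on `M`
    (cov : VectorField I M → VectorField I M → VectorField I M)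
    (haddl : ∀ x y z : VectorField I M, cov (x + y) z = cov x z + cov y z)
    (haddr : ∀ x y z : VectorField I M, cov x (y + z) = cov x y + cov x z)
    (hsmul : ∀ (f : SmoothFunc I M) (x y : VectorField I M), cov (f • x) y = f • cov x y)
    (hleib : ∀ (f : SmoothFunc I M) (x y : VectorField I M),
      cov x (f • y) = (x f) • y + f • cov x y)
    -- the torsion of `cov`
    (T : VectorField I M → VectorField I M → VectorField I M)
    (hT : ∀ x y, T x y = cov x y - cov y x - ⁅x, y⁆)
    -- vanishing curvature
    (hflat : ∀ x y z : VectorField I M, cov x (cov y z) - cov y (cov x z) - cov ⁅x, y⁆ z = 0)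
    -- parallel torsion: `cov T = 0`
    (hparT : ∀ x y z, cov x (T y z) = T (cov x y) z + T y (cov x z))
    -- the would-be post-Lie bracket `[x, y] = -T x y`
    (b : VectorField I M → VectorField I M → VectorField I M)
    (hb : ∀ x y, b x y = -(T x y)) :
    -- `b` is a Lie bracket:
    (∀ x y, b x y = -(b y x)) ∧
    (∀ x y z, b (b x y) z + b (b y z) x + b (b z x) y = 0) ∧
    -- first post-Lie axiom: `x ▷ [y,z] = [x ▷ y, z] + [y, x ▷ z]`
    (∀ x y z, cov x (b y z) = b (cov x y) z + b y (cov x z)) ∧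
    -- second post-Lie axiom: `[x,y] ▷ z = a▷(x,y,z) - a▷(y,x,z)`
    (∀ x y z, cov (b x y) z =
      (cov x (cov y z) - cov (cov x y) z) - (cov y (cov x z) - cov (cov y x) z)) := by
  -- pointwise lemmas about the commutator bracket of derivations
  have dnegLie : ∀ x y : VectorField I M, ⁅-x, y⁆ = -⁅x, y⁆ := by
    intro x y; ext f p; simp [Derivation.commutator_apply]; try abel
  have dlieNeg : ∀ x y : VectorField I M, ⁅x, -y⁆ = -⁅x, y⁆ := by
    intro x y; ext f p; simp [Derivation.commutator_apply]; try abel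
  have dsubLie : ∀ x y z : VectorField I M, ⁅x - y, z⁆ = ⁅x, z⁆ - ⁅y, z⁆ := by
    intro x y z; ext f p; simp [Derivation.commutator_apply, map_sub]; try abel
  have dlieSub : ∀ x y z : VectorField I M, ⁅x, y - z⁆ = ⁅x, y⁆ - ⁅x, z⁆ := by
    intro x y z; ext f p; simp [Derivation.commutator_apply, map_sub]; try abel
  have dskew : ∀ x y : VectorField I M, ⁅y, x⁆ = -⁅x, y⁆ := by
    intro x y; ext f p; simp [Derivation.commutator_apply]; try abel
  have dJac : ∀ x y z : VectorField I M, ⁅x, ⁅y, z⁆⁆ + ⁅y, ⁅z, x⁆⁆ + ⁅z, ⁅x, y⁆⁆ = 0 := by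
    intro x y z; ext f p; simp [Derivation.commutator_apply, map_sub]; try abel
  have dlieLie : ∀ x y z : VectorField I M, ⁅⁅x, y⁆, z⁆ = ⁅x, ⁅y, z⁆⁆ - ⁅y, ⁅x, z⁆⁆ := by
    intro x y z; ext f p; simp [Derivation.commutator_apply, map_sub]; try abel
  -- linearity consequences of additivity
  have cov0l : ∀ z : VectorField I M, cov 0 z = 0 := by
    intro z
    have h := haddl 0 0 z
    rw [add_zero] at h
    nth_rewrite 1 [← add_zero (cov 0 z)] at h
    exact (add_left_cancel h).symm
  have cov0r : ∀ z : VectorField I M, cov z 0 = 0 := by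
    intro z
    have h := haddr z 0 0
    rw [add_zero] at h
    nth_rewrite 1 [← add_zero (cov z 0)] at h
    exact (add_left_cancel h).symm
  have covnegl : ∀ x z : VectorField I M, cov (-x) z = -(cov x z) := by
    intro x z
    have h := haddl x (-x) z
    rw [add_neg_cancel, cov0l] at h
    exact eq_neg_of_add_eq_zero_right h.symm
  have covnegr : ∀ x z : VectorField I M, cov x (-z) = -(cov x z) := by
    intro x z
    have h := haddr x z (-z)
    rw [add_neg_cancel, cov0r] at h
    exact eq_neg_of_add_eq_zero_right h.symm
  have covsubl : ∀ x y z : VectorField I M, cov (x - y) z = cov x z - cov y z := by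
    intro x y z
    rw [sub_eq_add_neg, haddl, covnegl, sub_eq_add_neg]
  have covsubr : ∀ x y z : VectorField I M, cov x (y - z) = cov x y - cov x z := by
    intro x y z
    rw [sub_eq_add_neg, haddr, covnegr, sub_eq_add_neg]
  have hflat' : ∀ x y z : VectorField I M,
      cov ⁅x, y⁆ z = cov x (cov y z) - cov y (cov x z) := by
    intro x y z
    exact (sub_eq_zero.mp (hflat x y z)).symm
  have Tskew : ∀ x y : VectorField I M, T x y = -(T y x) := by
    intro x y
    rw [hT, hT, dskew y x]
    abel
  have Tnegl : ∀ x y : VectorField I M, T (-x) y = -(T x y) := by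
    intro x y
    rw [hT, hT, covnegl, covnegr, dnegLie]
    abel
  refine ⟨?_, ?_, ?_, ?_⟩
  · -- antisymmetry
    intro x y
    rw [hb, hb, Tskew x y, neg_neg]
  · -- Jacobi identity
    intro x y z
    simp only [hb, Tnegl, neg_neg]
    rw [hT (T x y) z, hT (T y z) x, hT (T z x) y]
    simp only [hparT]
    simp only [hT]
    simp only [covsubl, covnegl, hflat', dsubLie, dlieSub, dlieLie]
    rw [show ⁅cov z y, x⁆ = -⁅x, cov z y⁆ from dskew _ _,
        show ⁅cov x z, y⁆ = -⁅y, cov x z⁆ from dskew _ _,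
        show ⁅cov y x, z⁆ = -⁅z, cov y x⁆ from dskew _ _,
        show ⁅x, z⁆ = -⁅z, x⁆ from dskew _ _,
        show ⁅y, x⁆ = -⁅x, y⁆ from dskew _ _,
        show ⁅z, y⁆ = -⁅y, z⁆ from dskew _ _]
    simp only [dlieNeg, dnegLie]
    rw [eq_neg_of_add_eq_zero_right (dJac x y z)]
    abel
  · -- first post-Lie axiom
    intro x y z
    rw [hb, hb, hb, covnegr, hparT]
    abel
  · -- second post-Lie axiom
    intro x y z
    rw [hb, hT, covnegl, covsubl, covsubl, hflat']
    abel
end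

section
/- Let V be a finite-dimensional real vector space, h ⊆ gl(V) a Lie subalgebra, T : V × V → V an antisymmetric bilinear map, and R : V × V → h an antisymmetric bilinear map. Assume: (i) for all A ∈ h, a, b ∈ V: A(T(a,b)) = T(Aa, b) + T(a, Ab); (ii) for all A ∈ h, a, b ∈ V: [A, R(a,b)] = R(Aa, b) + R(a, Ab) (bracket in gl(V)); (iii) the first Bianchi identity: the cyclic sum over (a,b,c) of R(a,b)c equals the cyclic sum of T(T(a,b), c); (iv) the second Bianchi identity: the cyclic sum over (a,b,c) of R(T(a,b), c) vanishes. Then the bracket on g = V ⊕ h defined by [a, b] = −T(a,b) + R(a,b) for a, b ∈ V, [A, a] = −Aa for A ∈ h, a ∈ V, and [A, B] = −(AB − BA) for A, B ∈ h, is a Lie bracket (it is antisymmetric and satisfies the Jacobi identity). -/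
attribute [local instance 100] LieRing.ofAssociativeRing

/-- given a finite-dimensional real vector space `V`, a Lie subalgebra
`h ⊆ gl(V)`, antisymmetric bilinear maps `T : V × V → V` and `R : V × V → h` satisfying the
holonomy equivariance conditions (i)–(ii) and the two Bianchi identities (iii)–(iv), the
bracket on `g = V ⊕ h` given by `[a,b] = -T(a,b) + R(a,b)`, `[A,a] = -Aa`,
`[A,B] = -(AB - BA)` is a Lie bracket: antisymmetric and satisfying the Jacobi identity. -/
theorem lie_bracket_on_V_oplus_h
    {V : Type*} [AddCommGroup V] [Module ℝ V] [FiniteDimensional ℝ V]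
    (h : LieSubalgebra ℝ (Module.End ℝ V))
    (T : V →ₗ[ℝ] V →ₗ[ℝ] V) (R : V →ₗ[ℝ] V →ₗ[ℝ] Module.End ℝ V)
    -- antisymmetry of `T` and `R`
    (hTanti : ∀ a b, T a b = -T b a)
    (hRanti : ∀ a b, R a b = -R b a)
    -- `R` takes values in `h`
    (hRmem : ∀ a b, R a b ∈ h)
    -- (i) `A(T(a,b)) = T(Aa,b) + T(a,Ab)` for `A ∈ h`
    (hi : ∀ A ∈ h, ∀ a b, A (T a b) = T (A a) b + T a (A b))
    -- (ii) `[A, R(a,b)] = R(Aa,b) + R(a,Ab)` for `A ∈ h`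
    (hii : ∀ A ∈ h, ∀ a b, ⁅A, R a b⁆ = R (A a) b + R a (A b))
    -- (iii) first Bianchi identity
    (hBianchi1 : ∀ a b c : V,
      R a b c + R b c a + R c a b = T (T a b) c + T (T b c) a + T (T c a) b)
    -- (iv) second Bianchi identity
    (hBianchi2 : ∀ a b c : V, R (T a b) c + R (T b c) a + R (T c a) b = 0)
    -- the bracket on `g = V ⊕ h`
    (br : V × Module.End ℝ V → V × Module.End ℝ V → V × Module.End ℝ V)
    (hbr : ∀ (a b : V) (A B : Module.End ℝ V),
      br (a, A) (b, B) = (-(T a b) - A b + B a, R a b - (A * B - B * A))) :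
    -- antisymmetry
    (∀ p q, br p q = -(br q p)) ∧
    -- Jacobi identity (for elements of `g = V ⊕ h`)
    (∀ p q r : V × Module.End ℝ V, p.2 ∈ h → q.2 ∈ h → r.2 ∈ h →
      br p (br q r) + br q (br r p) + br r (br p q) = 0) := by
  constructor
  · rintro ⟨a, A⟩ ⟨b, B⟩
    rw [hbr, hbr, Prod.neg_mk, Prod.mk.injEq]
    constructor
    · rw [hTanti a b]; abel
    · rw [hRanti a b]; abel
  · rintro ⟨a, A⟩ ⟨b, B⟩ ⟨c, C⟩ hA hB hC
    simp only at hA hB hC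
    rw [hbr, hbr, hbr, hbr, hbr, hbr, Prod.mk_add_mk, Prod.mk_add_mk, Prod.mk_eq_zero]
    constructor
    · simp only [map_add, map_sub, map_neg, LinearMap.add_apply, LinearMap.sub_apply,
        LinearMap.neg_apply, Module.End.mul_apply]
      linear_combination (norm := module)
        hBianchi1 a b c + hTanti a (T b c) + hTanti b (T c a) + hTanti c (T a b)
        + hi A hA b c + hi B hB c a + hi C hC a b
        + hTanti a (B c) + hTanti b (C a) + hTanti c (A b)
    · have e1 := hii A hA b c; have e2 := hii B hB c a; have e3 := hii C hC a b
      simp only [Ring.lie_def] at e1 e2 e3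
      simp only [map_add, map_sub, map_neg, LinearMap.add_apply, LinearMap.sub_apply,
        LinearMap.neg_apply, mul_sub, sub_mul, mul_neg, neg_mul, mul_add, add_mul, mul_assoc]
      linear_combination (norm := module)
        hBianchi2 a b c - hRanti a (T b c) - hRanti b (T c a) - hRanti c (T a b)
        - e1 - e2 - e3
        - hRanti a (B c) - hRanti (A b) c - hRanti (C a) b
end

section
/- Let M be a smooth manifold with an affine connection ∇ that is flat (curvature R = 0) and has parallel torsion (∇T = 0). Then the torsion satisfies the Jacobi-type identity: for all vector fields x, y, z, T(T(x,y), z) + T(T(y,z), x) + T(T(z,x), y) = 0. Consequently, at each point p ∈ M, the bracket [u, v] := −T_p(u, v) makes the tangent space T_pM into a Lie algebra. -/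
open scoped Manifold

/-- for a flat affine connection with parallel torsion, the torsion satisfies
the Jacobi-type identity, so `-T` is a Lie bracket on vector fields (and hence on each
tangent space). -/
theorem torsion_jacobi_of_flat_parallel
    {E₀ : Type*} [NormedAddCommGroup E₀] [NormedSpace ℝ E₀]
    {H₀ : Type*} [TopologicalSpace H₀] (I : ModelWithCorners ℝ E₀ H₀)
    (M : Type*) [TopologicalSpace M] [ChartedSpace H₀ M] [IsManifold I (⊤ : ℕ∞) M]
    (cov : VectorField I M → VectorField I M → VectorField I M)
    (haddl : ∀ x y z : VectorField I M, cov (x + y) z = cov x z + cov y z)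
    (haddr : ∀ x y z : VectorField I M, cov x (y + z) = cov x y + cov x z)
    (hsmul : ∀ (f : SmoothFunc I M) (x y : VectorField I M), cov (f • x) y = f • cov x y)
    (hleib : ∀ (f : SmoothFunc I M) (x y : VectorField I M),
      cov x (f • y) = (x f) • y + f • cov x y)
    (T : VectorField I M → VectorField I M → VectorField I M)
    (hT : ∀ x y, T x y = cov x y - cov y x - ⁅x, y⁆)
    -- flatness: curvature `R = 0`
    (hflat : ∀ x y z : VectorField I M, cov x (cov y z) - cov y (cov x z) - cov ⁅x, y⁆ z = 0)
    -- parallel torsion: `∇ T = 0`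
    (hparT : ∀ x y z, cov x (T y z) = T (cov x y) z + T y (cov x z)) :
    -- the Jacobi-type identity for the torsion
    (∀ x y z, T (T x y) z + T (T y z) x + T (T z x) y = 0) ∧
    -- consequently `[u,v] := -T u v` is antisymmetric and satisfies the Jacobi identity,
    -- i.e. it is a Lie bracket (in particular on each tangent space `T_p M`)
    (∀ x y, -(T x y) = -(-(T y x))) ∧
    (∀ x y z, -(T (-(T x y)) z) + -(T (-(T y z)) x) + -(T (-(T z x)) y) = 0) := by
  -- bracket lemmas, elaborated in this context so `rw` matches instances
  have hbneg : ∀ u v : VectorField I M, ⁅-u, v⁆ = -⁅u, v⁆ := fun u v => neg_lie u v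
  have hbsubl : ∀ u v w : VectorField I M, ⁅u - v, w⁆ = ⁅u, w⁆ - ⁅v, w⁆ :=
    fun u v w => sub_lie u v w
  have hbsubr : ∀ u v w : VectorField I M, ⁅u, v - w⁆ = ⁅u, v⁆ - ⁅u, w⁆ :=
    fun u v w => lie_sub u v w
  have hbskew : ∀ u v : VectorField I M, ⁅u, v⁆ = -⁅v, u⁆ := fun u v => (lie_skew u v).symm
  -- linearity consequences
  have h0l : ∀ z : VectorField I M, cov 0 z = 0 := by
    intro z
    have h := haddl 0 0 z
    rw [add_zero] at h
    exact left_eq_add.mp h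
  have hnegl : ∀ (a z : VectorField I M), cov (-a) z = -cov a z := by
    intro a z
    have h := haddl a (-a) z
    rw [add_neg_cancel, h0l] at h
    exact (neg_eq_of_add_eq_zero_right h.symm).symm
  have hsubl : ∀ (a b z : VectorField I M), cov (a - b) z = cov a z - cov b z := by
    intro a b z
    rw [sub_eq_add_neg, haddl, hnegl, sub_eq_add_neg]
  have h0r : ∀ z : VectorField I M, cov z 0 = 0 := by
    intro z
    have h := haddr z 0 0
    rw [add_zero] at h
    exact left_eq_add.mp h
  have hnegr : ∀ (z a : VectorField I M), cov z (-a) = -cov z a := by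
    intro z a
    have h := haddr z a (-a)
    rw [add_neg_cancel, h0r] at h
    exact (neg_eq_of_add_eq_zero_right h.symm).symm
  have hTneg : ∀ a c : VectorField I M, T (-a) c = -T a c := by
    intro a c
    rw [hT, hT, hnegl, hnegr, hbneg]
    abel
  have hflat' : ∀ a b c : VectorField I M,
      cov ⁅a, b⁆ c = cov a (cov b c) - cov b (cov a c) := by
    intro a b c
    exact (sub_eq_zero.mp (hflat a b c)).symm
  have key : ∀ x y z : VectorField I M,
      T (T x y) z + T (T y z) x + T (T z x) y = 0 := by
    intro x y z
    have j0 := lie_jacobi x y z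
    have j1 : ⁅z, ⁅x, y⁆⁆ + (⁅x, ⁅y, z⁆⁆ + ⁅y, ⁅z, x⁆⁆) = (0 : VectorField I M) := by
      rw [← j0]; abel
    have j2 := eq_neg_of_add_eq_zero_left j1
    have jac : ⁅⁅x, y⁆, z⁆ = -⁅⁅y, z⁆, x⁆ - ⁅⁅z, x⁆, y⁆ := by
      rw [hbskew ⁅x, y⁆ z, hbskew ⁅y, z⁆ x, hbskew ⁅z, x⁆ y, j2]
      abel
    rw [hT (T x y) z, hT (T y z) x, hT (T z x) y,
        hparT z x y, hparT x y z, hparT y z x,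
        hT (cov z x) y, hT x (cov z y), hT (cov x y) z, hT y (cov x z),
        hT (cov y z) x, hT z (cov y x),
        hT x y, hT y z, hT z x,
        hsubl, hsubl, hsubl, hsubl, hsubl, hsubl,
        hflat' x y z, hflat' y z x, hflat' z x y,
        hbsubl, hbsubl, hbsubl, hbsubl, hbsubl, hbsubl, jac,
        hbskew x (cov z y), hbskew y (cov x z), hbskew z (cov y x)]
    abel
  refine ⟨key, ?_, ?_⟩
  · intro x y
    rw [neg_neg, hT x y, hT y x, hbskew y x]
    abel
  · intro x y z
    rw [hTneg, hTneg, hTneg, neg_neg, neg_neg, neg_neg]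
    exact key x y z
end
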